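/- Let (Ω, ℱ, P) be a probability space and let Y : Ω → ℝ be a random variable taking values in {0, 1} almost surely, with p := P(Y = 1). Fix s₀ ∈ ℝ and γ ≥ 0. Let 𝒮 be the set of real numbers E[−S·Y] as S ranges over all measurable functions S : Ω → ℝ with s₀ − γ ≤ S ≤ s₀ + γ almost surely and E[S] = s₀. Then −s₀·p − γ·(1/2 − |p − 1/2|) is the least element of 𝒮 (equivalently, the least element is E[−s₀·Y] − γ·min(p, 1 − p)). -/

import Mathlib

open MeasureTheory

/-- minimization half of Proposition 2 (binary outcome, single stratum).
For a binary outcome `Y` with `p = P(Y = 1)`, among all measurable scores `S` with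
`s₀ - γ ≤ S ≤ s₀ + γ` a.s. and `E[S] = s₀`, the least value of `E[-S⬝Y]` is
`-s₀⬝p - γ⬝(1/2 - |p - 1/2|)`. -/
theorem ade_lower_bound_binary_outcome
    {Ω : Type*} [MeasurableSpace Ω] (P : Measure Ω) [IsProbabilityMeasure P]
    (Y : Ω → ℝ) (hYm : Measurable Y)
    (hbin : ∀ᵐ ω ∂P, Y ω = 0 ∨ Y ω = 1)
    (p : ℝ) (hp : p = (P {ω | Y ω = 1}).toReal)
    (s₀ γ : ℝ) (hγ : 0 ≤ γ) :
    IsLeast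
      {v : ℝ | ∃ S : Ω → ℝ, Measurable S ∧
        (∀ᵐ ω ∂P, s₀ - γ ≤ S ω ∧ S ω ≤ s₀ + γ) ∧
        (∫ ω, S ω ∂P = s₀) ∧
        v = ∫ ω, -(S ω * Y ω) ∂P}
      (-(s₀ * p) - γ * (1/2 - |p - 1/2|)) := by
  have hA : MeasurableSet {ω | Y ω = 1} := hYm (measurableSet_singleton 1)
  set A := {ω | Y ω = 1} with hAdef
  have hp0 : 0 ≤ p := hp ▸ ENNReal.toReal_nonneg
  have hp1 : p ≤ 1 := by
    rw [hp]
    exact ENNReal.toReal_le_of_le_ofReal one_pos.le (by simpa using prob_le_one (μ := P) (s := A))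
  have hkey : 1/2 - |p - 1/2| = min p (1-p) := by
    rcases le_total p (1-p) with h | h
    · rw [min_eq_left h, abs_of_nonpos (by linarith)]; ring
    · rw [min_eq_right h, abs_of_nonneg (by linarith)]; ring
  set I := A.indicator (fun _ => (1:ℝ)) with hIdef
  have hIm : Measurable I := measurable_const.indicator hA
  have hIint : Integrable I P := (integrable_const (1:ℝ)).indicator hA
  have hIval : ∀ ω, I ω = 0 ∨ I ω = 1 := by
    intro ω; by_cases h : ω ∈ A
    · right; simp [hIdef, Set.indicator_of_mem h]
    · left; simp [hIdef, Set.indicator_of_notMem h]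
  have hI01 : ∀ ω, 0 ≤ I ω ∧ I ω ≤ 1 := by
    intro ω; rcases hIval ω with h | h <;> rw [h] <;> norm_num
  have hIint' : ∫ ω, I ω ∂P = p := by
    rw [hIdef, integral_indicator_const (1:ℝ) hA, hp]; simp [Measure.real]
  have hYI : Y =ᵐ[P] I := by
    filter_upwards [hbin] with ω hω
    rcases hω with h | h
    · have : ω ∉ A := by simp [hAdef, h]
      simp [hIdef, Set.indicator_of_notMem this, h]
    · have : ω ∈ A := by simp [hAdef, h]
      simp [hIdef, Set.indicator_of_mem this, h]
  constructor
  · -- membership: construct the optimal S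
    set m := max p (1-p) with hmdef
    have hm2 : 1/2 ≤ m := by
      rcases le_total p (1-p) with h | h
      · rw [hmdef, max_eq_right h]; linarith
      · rw [hmdef, max_eq_left h]; linarith
    have hm0 : 0 < m := by linarith
    set a := γ * (1-p) / m with hadef
    set b := γ * p / m with hbdef
    have ha0 : 0 ≤ a := div_nonneg (by nlinarith) hm0.le
    have hb0 : 0 ≤ b := div_nonneg (by nlinarith) hm0.le
    have haγ : a ≤ γ := by
      rw [hadef, div_le_iff₀ hm0]
      nlinarith [le_max_right p (1-p)]
    have hbγ : b ≤ γ := by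
      rw [hbdef, div_le_iff₀ hm0]
      nlinarith [le_max_left p (1-p)]
    have hab : a * p = b * (1-p) := by rw [hadef, hbdef]; ring
    have hap : a * p = γ * min p (1-p) := by
      rcases le_total p (1-p) with h | h
      · have hm' : m = 1 - p := max_eq_right h
        have hne : (1 - p) ≠ 0 := by rw [← hm']; exact hm0.ne'
        rw [min_eq_left h, hadef, hm']
        field_simp
      · have hm' : m = p := max_eq_left h
        have hne : p ≠ 0 := by rw [← hm']; exact hm0.ne'
        rw [min_eq_right h, hadef, hm']
        field_simp
    refine ⟨fun ω => (s₀ - b) + (a + b) * I ω, ?_, ?_, ?_, ?_⟩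
    · exact measurable_const.add (measurable_const.mul hIm)
    · refine Filter.Eventually.of_forall fun ω => ?_
      dsimp only
      rcases hIval ω with h | h <;> rw [h] <;> constructor <;> linarith [ha0, hb0, haγ, hbγ]
    · rw [integral_add (integrable_const _) (hIint.const_mul _), integral_const,
        integral_const_mul, hIint']
      simp only [measure_univ, probReal_univ, ENNReal.toReal_one, smul_eq_mul, one_mul]
      linarith [hab]
    · have hcong : (fun ω => -(((s₀ - b) + (a + b) * I ω) * Y ω))
          =ᵐ[P] (fun ω => -((s₀ + a) * I ω)) := by
        filter_upwards [hYI] with ω hω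
        rw [hω]
        rcases hIval ω with h | h <;> rw [h] <;> ring
      rw [integral_congr_ae hcong, integral_neg, integral_const_mul, hIint', hkey]
      linarith [hap]
  · -- lower bound
    rintro v ⟨S, hSm, hSbd, hSmean, rfl⟩
    have habs : ∀ᵐ ω ∂P, |S ω| ≤ |s₀| + γ := by
      filter_upwards [hSbd] with ω hω
      rw [abs_le]
      have := neg_abs_le s₀
      have := le_abs_self s₀
      constructor <;> linarith [hω.1, hω.2]
    have hSint : Integrable S P := by
      refine (integrable_const (|s₀| + γ)).mono' hSm.aestronglyMeasurable ?_
      filter_upwards [habs] with ω hω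
      rwa [Real.norm_eq_abs]
    have hSIint : Integrable (fun ω => S ω * I ω) P := by
      refine (integrable_const (|s₀| + γ)).mono' (hSm.mul hIm).aestronglyMeasurable ?_
      filter_upwards [habs] with ω hω
      rw [Real.norm_eq_abs, abs_mul]
      have h2 : |I ω| ≤ 1 := by
        rcases hIval ω with h | h <;> rw [h] <;> norm_num
      have h3 : (0:ℝ) ≤ |s₀| + γ := by positivity
      calc |S ω| * |I ω| ≤ (|s₀| + γ) * 1 := mul_le_mul hω h2 (abs_nonneg _) h3
        _ = |s₀| + γ := mul_one _
    have hub1 : ∫ ω, S ω * I ω ∂P ≤ (s₀ + γ) * p := by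
      have h : ∫ ω, S ω * I ω ∂P ≤ ∫ ω, (s₀ + γ) * I ω ∂P := by
        apply integral_mono_ae hSIint (hIint.const_mul _)
        filter_upwards [hSbd] with ω hω
        exact mul_le_mul_of_nonneg_right hω.2 (hI01 ω).1
      rwa [integral_const_mul, hIint'] at h
    have hSJint : Integrable (fun ω => S ω * (1 - I ω)) P := by
      have heq : (fun ω => S ω * (1 - I ω)) = fun ω => S ω - S ω * I ω := by
        funext ω; ring
      rw [heq]; exact hSint.sub hSIint
    have hub2 : ∫ ω, S ω * I ω ∂P ≤ s₀ - (s₀ - γ) * (1 - p) := by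
      have hJint : Integrable (fun ω => 1 - I ω) P := by
        exact (integrable_const (1:ℝ)).sub hIint
      have h1 : ∫ ω, (s₀ - γ) * (1 - I ω) ∂P ≤ ∫ ω, S ω * (1 - I ω) ∂P := by
        apply integral_mono_ae (hJint.const_mul _) hSJint
        filter_upwards [hSbd] with ω hω
        exact mul_le_mul_of_nonneg_right hω.1 (by linarith [(hI01 ω).2])
      have h2 : ∫ ω, (s₀ - γ) * (1 - I ω) ∂P = (s₀ - γ) * (1 - p) := by
        rw [integral_const_mul, integral_sub (integrable_const 1) hIint, integral_const, hIint']
        simp [measure_univ]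
      have hsplit : ∫ ω, S ω * I ω ∂P + ∫ ω, S ω * (1 - I ω) ∂P = s₀ := by
        rw [← integral_add hSIint hSJint]
        have heq : (fun ω => S ω * I ω + S ω * (1 - I ω)) = S := by funext ω; ring
        rw [heq]; exact hSmean
      linarith [h2 ▸ h1]
    have hveq : ∫ ω, -(S ω * Y ω) ∂P = -∫ ω, S ω * I ω ∂P := by
      rw [← integral_neg]
      apply integral_congr_ae
      filter_upwards [hYI] with ω hω
      rw [hω]
    rw [hveq, hkey]
    rcases le_total p (1-p) with h | h
    · rw [min_eq_left h]; nlinarith [hub1]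
    · rw [min_eq_right h]; nlinarith [hub2]
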